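/- Let X ∈ 𝓜 and Y ∈ 𝓕. Suppose: L > 0 satisfies ‖φ(A)‖ ≤ L‖A‖ for all A ∈ ℝ^{n×p}; δ > 0 satisfies ‖Xᵀφ(Z) + Zᵀφ(X)‖ ≥ δ‖Z‖ for all Z ∈ 𝓕; α > 0 satisfies ‖X‖ + ‖Y − X‖ ≤ α/3; and ‖Y − X‖ ≤ δ/(4L). Then (3/(2αL))‖C(Y)‖ ≤ ‖Y − X‖ ≤ (2/δ)‖C(Y)‖. -/

import Mathlib

open Matrix

attribute [local instance] Matrix.frobeniusNormedAddCommGroup Matrix.frobeniusNormedSpace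

/-- Frobenius inner product `⟨A, B⟩ = tr(AᵀB)`. -/
noncomputable def frobInner {n p : ℕ} (A B : Matrix (Fin n) (Fin p) ℝ) : ℝ :=
  (Aᵀ * B).trace

/-- The constraint map `C(X) = Xᵀ φ(X) − I_p`. -/
noncomputable def Cmap {n p : ℕ}
    (φ : Matrix (Fin n) (Fin p) ℝ →ₗ[ℝ] Matrix (Fin n) (Fin p) ℝ)
    (X : Matrix (Fin n) (Fin p) ℝ) : Matrix (Fin p) (Fin p) ℝ :=
  Xᵀ * φ X - 1

/-- The constraint dissolving operator `𝒜(X) = (3/2)X − (1/2)X φ(X)ᵀ X`. -/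
noncomputable def Amap {n p : ℕ}
    (φ : Matrix (Fin n) (Fin p) ℝ →ₗ[ℝ] Matrix (Fin n) (Fin p) ℝ)
    (X : Matrix (Fin n) (Fin p) ℝ) : Matrix (Fin n) (Fin p) ℝ :=
  (3/2 : ℝ) • X - (1/2 : ℝ) • (X * (φ X)ᵀ * X)

/-- `𝒢 = span{X₁ᵀ X₂ : X₁, X₂ ∈ 𝓕}`. -/
noncomputable def Gspan {n p : ℕ} (𝓕 : Submodule ℝ (Matrix (Fin n) (Fin p) ℝ)) :
    Submodule ℝ (Matrix (Fin p) (Fin p) ℝ) :=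
  Submodule.span ℝ {T | ∃ X₁ ∈ 𝓕, ∃ X₂ ∈ 𝓕, T = X₁ᵀ * X₂}

theorem stmt_15 {n p : ℕ} (hn : 0 < n) (hp : 0 < p)
    (φ : Matrix (Fin n) (Fin p) ℝ →ₗ[ℝ] Matrix (Fin n) (Fin p) ℝ)
    (𝓕 : Submodule ℝ (Matrix (Fin n) (Fin p) ℝ))
    (hφ𝓕 : ∀ X ∈ 𝓕, φ X ∈ 𝓕)
    (X : Matrix (Fin n) (Fin p) ℝ) (hX : X ∈ 𝓕) (hX1 : Xᵀ * φ X = 1)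
    (Y : Matrix (Fin n) (Fin p) ℝ) (hY : Y ∈ 𝓕)
    (L : ℝ) (hL0 : 0 < L)
    (hL : ∀ A : Matrix (Fin n) (Fin p) ℝ, ‖φ A‖ ≤ L * ‖A‖)
    (δ : ℝ) (hδ0 : 0 < δ)
    (hδ : ∀ Z ∈ 𝓕, δ * ‖Z‖ ≤ ‖Xᵀ * φ Z + Zᵀ * φ X‖)
    (α : ℝ) (hα0 : 0 < α)
    (hα : ‖X‖ + ‖Y - X‖ ≤ α / 3)
    (hYX : ‖Y - X‖ ≤ δ / (4 * L)) :
    (3 / (2 * α * L)) * ‖Cmap φ Y‖ ≤ ‖Y - X‖ ∧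
    ‖Y - X‖ ≤ (2 / δ) * ‖Cmap φ Y‖ := by
  set E := Y - X with hE
  have hE𝓕 : E ∈ 𝓕 := Submodule.sub_mem _ hY hX
  have hYXE : Y = X + E := by rw [hE]; abel
  have hC : Cmap φ Y = (Xᵀ * φ E + Eᵀ * φ X) + Eᵀ * φ E := by
    rw [Cmap, hYXE, map_add, transpose_add]
    simp only [Matrix.add_mul, Matrix.mul_add]
    rw [hX1]
    abel
  -- norm bounds on pieces
  have hnE : (0:ℝ) ≤ ‖E‖ := norm_nonneg _
  have hnX : (0:ℝ) ≤ ‖X‖ := norm_nonneg _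
  have h1 : ‖Xᵀ * φ E‖ ≤ ‖X‖ * (L * ‖E‖) := by
    calc ‖Xᵀ * φ E‖ ≤ ‖Xᵀ‖ * ‖φ E‖ := Matrix.frobenius_norm_mul _ _
      _ ≤ ‖X‖ * (L * ‖E‖) := by
          rw [Matrix.frobenius_norm_transpose]
          exact mul_le_mul_of_nonneg_left (hL E) hnX
  have h2 : ‖Eᵀ * φ X‖ ≤ ‖E‖ * (L * ‖X‖) := by
    calc ‖Eᵀ * φ X‖ ≤ ‖Eᵀ‖ * ‖φ X‖ := Matrix.frobenius_norm_mul _ _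
      _ ≤ ‖E‖ * (L * ‖X‖) := by
          rw [Matrix.frobenius_norm_transpose]
          exact mul_le_mul_of_nonneg_left (hL X) hnE
  have h3 : ‖Eᵀ * φ E‖ ≤ ‖E‖ * (L * ‖E‖) := by
    calc ‖Eᵀ * φ E‖ ≤ ‖Eᵀ‖ * ‖φ E‖ := Matrix.frobenius_norm_mul _ _
      _ ≤ ‖E‖ * (L * ‖E‖) := by
          rw [Matrix.frobenius_norm_transpose]
          exact mul_le_mul_of_nonneg_left (hL E) hnE
  constructor
  · -- upper bound on ‖C(Y)‖
    have hCub : ‖Cmap φ Y‖ ≤ L * ‖E‖ * (2 * ‖X‖ + ‖E‖) := by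
      calc ‖Cmap φ Y‖ ≤ ‖Xᵀ * φ E + Eᵀ * φ X‖ + ‖Eᵀ * φ E‖ := by
            rw [hC]; exact norm_add_le _ _
        _ ≤ (‖Xᵀ * φ E‖ + ‖Eᵀ * φ X‖) + ‖Eᵀ * φ E‖ := by
            gcongr; exact norm_add_le _ _
        _ ≤ (‖X‖ * (L * ‖E‖) + ‖E‖ * (L * ‖X‖)) + ‖E‖ * (L * ‖E‖) := by
            gcongr
        _ = L * ‖E‖ * (2 * ‖X‖ + ‖E‖) := by ring
    have hsum : 2 * ‖X‖ + ‖E‖ ≤ 2 * (α / 3) := by nlinarith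
    have : ‖Cmap φ Y‖ ≤ L * ‖E‖ * (2 * (α / 3)) := by
      refine hCub.trans ?_
      have := mul_nonneg hL0.le hnE
      nlinarith
    rw [div_mul_eq_mul_div, div_le_iff₀ (by positivity)]
    nlinarith
  · -- lower bound
    have hlow := hδ E hE𝓕
    have hsub : ‖Xᵀ * φ E + Eᵀ * φ X‖ ≤ ‖Cmap φ Y‖ + ‖Eᵀ * φ E‖ := by
      have : Xᵀ * φ E + Eᵀ * φ X = Cmap φ Y - Eᵀ * φ E := by rw [hC]; abel
      rw [this]
      exact norm_sub_le _ _
    have hE2 : ‖E‖ * (L * ‖E‖) ≤ (δ / 4) * ‖E‖ := by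
      have h4 : L * ‖E‖ ≤ δ / 4 := by
        calc L * ‖E‖ ≤ L * (δ / (4 * L)) := by gcongr
          _ = δ / 4 := by field_simp
      nlinarith
    have key : δ * ‖E‖ ≤ ‖Cmap φ Y‖ + (δ / 4) * ‖E‖ := by
      calc δ * ‖E‖ ≤ ‖Xᵀ * φ E + Eᵀ * φ X‖ := hlow
        _ ≤ ‖Cmap φ Y‖ + ‖Eᵀ * φ E‖ := hsub
        _ ≤ ‖Cmap φ Y‖ + (δ / 4) * ‖E‖ := by linarith [hE2, h3]
    rw [div_mul_eq_mul_div, le_div_iff₀ hδ0]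
    nlinarith
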